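/- The Start Axiom is realizable by extending a team: given a team X over domain V, tuples a⃗, b⃗, c⃗ of variables from V, and a tuple x⃗ of pairwise distinct fresh variables with |x⃗| = |c⃗|, there exists a team X' extending X (obtained by assigning values to the variables of x⃗, i.e., X' restricted to V equals X) such that X' satisfies a⃗c⃗ ⊆ a⃗x⃗, b⃗ ⊥_{a⃗} x⃗, and a⃗x⃗ ⊆ a⃗c⃗. Specifically, X' = { s[t/x⃗] : s ∈ X, t ∈ { s'(c⃗) : s' ∈ X, s'(a⃗) = s(a⃗) } } works. -/
import Mathlib


/-- A team is a set of assignments; the inclusion atom `x ⊆ y` holds in team `X`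
iff for every `s ∈ X` there is `s' ∈ X` with `s(x) = s'(y)` componentwise. -/
def InclAtom {M Var : Type*} {n : ℕ} (X : Set (Var → M)) (x y : Fin n → Var) : Prop :=
  ∀ s ∈ X, ∃ s' ∈ X, ∀ i, s (x i) = s' (y i)

/-- The conditional independence atom `y ⊥_x z` holds in team `X` iff for all
`s, s' ∈ X` agreeing on `x` there is `s'' ∈ X` with `s''(x) = s(x)`,
`s''(y) = s(y)` and `s''(z) = s'(z)`. -/
def IndepAtom {M Var : Type*} {k m n : ℕ} (X : Set (Var → M)) (x : Fin k → Var)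
    (y : Fin m → Var) (z : Fin n → Var) : Prop :=
  ∀ s ∈ X, ∀ s' ∈ X, (∀ i, s (x i) = s' (x i)) →
    ∃ s'' ∈ X, (∀ i, s'' (x i) = s (x i)) ∧ (∀ i, s'' (y i) = s (y i)) ∧
      (∀ i, s'' (z i) = s' (z i))

lemma append_left' {V : Type*} {k n : ℕ} (f : Fin k → V) (g : Fin n → V) (i : Fin k) :
    Fin.append f g (Fin.castAdd n i) = f i := Fin.append_left f g i

/-- The Start Axiom is realizable: given a team X over variables V and tuples
a⃗, b⃗, c⃗ over V, introducing fresh variables x⃗ (modeled by the summand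
Fin n, pairwise distinct and disjoint from V), there is a team X' over
V ⊕ Fin n whose restriction to V is X and which satisfies
a⃗c⃗ ⊆ a⃗x⃗, b⃗ ⊥_{a⃗} x⃗ and a⃗x⃗ ⊆ a⃗c⃗. -/
theorem start_axiom {M V : Type*} {k m n : ℕ} (X : Set (V → M))
    (a : Fin k → V) (b : Fin m → V) (c : Fin n → V) :
    ∃ X' : Set ((V ⊕ Fin n) → M),
      ((fun t : (V ⊕ Fin n) → M => t ∘ Sum.inl) '' X' = X) ∧
      InclAtom X' (Fin.append (Sum.inl ∘ a) (Sum.inl ∘ c))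
        (Fin.append (Sum.inl ∘ a) Sum.inr) ∧
      IndepAtom X' (Sum.inl ∘ a) (Sum.inl ∘ b) Sum.inr ∧
      InclAtom X' (Fin.append (Sum.inl ∘ a) Sum.inr)
        (Fin.append (Sum.inl ∘ a) (Sum.inl ∘ c)) := by
  classical
  refine ⟨{t | ∃ s ∈ X, ∃ s' ∈ X, (∀ i, s (a i) = s' (a i)) ∧
      t = Sum.elim s (fun i => s' (c i))}, ?_, ?_, ?_, ?_⟩
  · ext s
    constructor
    · rintro ⟨t, ⟨u, hu, u', _, _, rfl⟩, rfl⟩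
      exact hu
    · intro hs
      exact ⟨Sum.elim s (fun i => s (c i)), ⟨s, hs, s, hs, fun _ => rfl, rfl⟩, rfl⟩
  · rintro t ⟨s, hs, s', hs', hag, rfl⟩
    refine ⟨Sum.elim s (fun i => s (c i)), ⟨s, hs, s, hs, fun _ => rfl, rfl⟩, ?_⟩
    intro i
    refine Fin.addCases (fun j => ?_) (fun j => ?_) i <;>
      simp [Fin.append_left, Fin.append_right]
  · rintro t ⟨s, hs, s', hs', hag, rfl⟩ u ⟨r, hr, r', hr', hag', rfl⟩ h
    simp only [Function.comp, Sum.elim_inl] at h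
    refine ⟨Sum.elim s (fun i => r' (c i)),
      ⟨s, hs, r', hr', fun i => (h i).trans (hag' i), rfl⟩, ?_, ?_, ?_⟩ <;>
      simp [Function.comp]
  · rintro t ⟨s, hs, s', hs', hag, rfl⟩
    refine ⟨Sum.elim s' (fun i => s' (c i)), ⟨s', hs', s', hs', fun _ => rfl, rfl⟩, ?_⟩
    intro i
    refine Fin.addCases (fun j => ?_) (fun j => ?_) i <;>
      simp [Fin.append_left, Fin.append_right, hag]
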